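/- Let β ∈ (-1,0), p ≥ 1, α ∈ (0,1) with 1 + βp > 0 and 3 + (α+β-3)p > 0, and let T > 0. Then ∫₀ᵀ ∫ₛᵀ (u-s)^{(α-2)p} ( ∫₀^s |((u-v+ε)^β - (u-v)^β) - ((s-v+ε)^β - (s-v)^β)|^p dv ) du ds → 0 as ε → 0⁺. -/

import Mathlib

open MeasureTheory Real Filter

private lemma aux_mono {β x y : ℝ} (hβ : β ≤ 0) (hy : 0 < y) (hxy : y ≤ x) : x ^ β ≤ y ^ β :=
  Real.rpow_le_rpow_of_nonpos hy hxy hβ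

private lemma aux_diff_le (β : ℝ) (hβ1 : -1 < β) (hβ0 : β < 0) {x ε : ℝ} (hx : 0 < x)
    (hε : 0 < ε) : x ^ β - (x + ε) ^ β ≤ ε * x ^ (β - 1) := by
  have h0 : (0:ℝ) ∉ Set.uIcc x (x + ε) := by
    rw [Set.uIcc_of_le (by linarith)]
    rintro ⟨h1, -⟩; linarith
  have hkey : (∫ t in x..(x + ε), t ^ (β - 1)) = ((x + ε) ^ β - x ^ β) / β := by
    rw [integral_rpow (Or.inr ⟨by intro h; exact hβ0.ne (by linarith), h0⟩)]
    norm_num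
  have hmono : (∫ t in x..(x + ε), t ^ (β - 1)) ≤ ∫ _ in x..(x + ε), x ^ (β - 1) := by
    apply intervalIntegral.integral_mono_on (by linarith)
    · apply ContinuousOn.intervalIntegrable
      intro t ht
      rw [Set.uIcc_of_le (by linarith)] at ht
      exact (Real.continuousAt_rpow_const t (β - 1)
        (Or.inl (lt_of_lt_of_le hx ht.1).ne')).continuousWithinAt
    · exact intervalIntegrable_const
    · intro t ht
      exact aux_mono (by linarith) hx ht.1
  rw [intervalIntegral.integral_const, smul_eq_mul] at hmono
  have hmono' : (∫ t in x..(x + ε), t ^ (β - 1)) ≤ ε * x ^ (β - 1) := by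
    have : x + ε - x = ε := by ring
    rwa [this] at hmono
  have hI0 : 0 ≤ ∫ t in x..(x + ε), t ^ (β - 1) :=
    intervalIntegral.integral_nonneg (by linarith)
      (fun t ht => Real.rpow_nonneg (le_trans hx.le ht.1) _)
  have heq : x ^ β - (x + ε) ^ β = (-β) * ∫ t in x..(x + ε), t ^ (β - 1) := by
    rw [hkey, neg_mul, mul_comm β, div_mul_cancel₀ _ hβ0.ne, neg_sub]
  rw [heq]
  nlinarith [hmono', hI0, Real.rpow_nonneg hx.le (β - 1)]

private lemma aux_D1 (β : ℝ) (hβ0 : β < 0) {x y ε : ℝ} (hy : 0 < y)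
    (hxy : y ≤ x) (hε : 0 < ε) : |(x + ε) ^ β - x ^ β| ≤ y ^ β := by
  have hx : 0 < x := lt_of_lt_of_le hy hxy
  have h1 : (x + ε) ^ β ≤ x ^ β := aux_mono hβ0.le hx (by linarith)
  have h2 : 0 ≤ (x + ε) ^ β := Real.rpow_nonneg (by linarith) β
  have h3 : x ^ β ≤ y ^ β := aux_mono hβ0.le hy hxy
  rw [abs_sub_comm, abs_of_nonneg (by linarith)]
  linarith

private lemma aux_D2 (β : ℝ) (hβ1 : -1 < β) (hβ0 : β < 0) {x y ε : ℝ} (hy : 0 < y)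
    (hxy : y ≤ x) (hε : 0 < ε) : |(x + ε) ^ β - x ^ β| ≤ ε * y ^ (β - 1) := by
  have hx : 0 < x := lt_of_lt_of_le hy hxy
  have h1 : (x + ε) ^ β ≤ x ^ β := aux_mono hβ0.le hx (by linarith)
  have h4 := aux_diff_le β hβ1 hβ0 hx hε
  have h5 : x ^ (β - 1) ≤ y ^ (β - 1) := aux_mono (by linarith) hy hxy
  rw [abs_sub_comm, abs_of_nonneg (by linarith)]
  nlinarith [mul_le_mul_of_nonneg_left h5 hε.le]

private lemma aux_B1 (β : ℝ) (hβ1 : -1 < β) (hβ0 : β < 0) {v s u ε : ℝ} (hvs : v < s)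
    (hsu : s ≤ u) (hε : 0 < ε) :
    |((u - v + ε) ^ β - (u - v) ^ β) - ((s - v + ε) ^ β - (s - v) ^ β)| ≤
      (u - s) * (s - v) ^ (β - 1) := by
  set f : ℝ → ℝ := fun t => (t - v + ε) ^ β - (t - v) ^ β with hf
  set g : ℝ → ℝ := fun t => 1 * β * (t - v + ε) ^ (β - 1) - 1 * β * (t - v) ^ (β - 1) with hg
  have key : ∀ t ∈ Set.Icc s u, HasDerivWithinAt f (g t) (Set.Icc s u) t := by
    intro t ht
    have htv : 0 < t - v := by have := ht.1; linarith
    have h1 : HasDerivAt (fun t : ℝ => t - v + ε) 1 t := by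
      simpa using ((hasDerivAt_id t).sub_const v).add_const ε
    have h2 : HasDerivAt (fun t : ℝ => t - v) 1 t := by
      simpa using (hasDerivAt_id t).sub_const v
    exact ((h1.rpow_const (Or.inl (by linarith : (0:ℝ) < t - v + ε).ne')).sub
      (h2.rpow_const (Or.inl htv.ne'))).hasDerivWithinAt
  have bound : ∀ t ∈ Set.Icc s u, ‖g t‖ ≤ (s - v) ^ (β - 1) := by
    intro t ht
    have htv : 0 < t - v := by have := ht.1; linarith
    have hA : (t - v + ε) ^ (β - 1) ≤ (t - v) ^ (β - 1) := aux_mono (by linarith) htv (by linarith)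
    have hA0 : 0 ≤ (t - v + ε) ^ (β - 1) := Real.rpow_nonneg (by linarith) _
    have hB : (t - v) ^ (β - 1) ≤ (s - v) ^ (β - 1) :=
      aux_mono (by linarith) (by linarith) (by have := ht.1; linarith)
    have hB0 : 0 ≤ (s - v) ^ (β - 1) := Real.rpow_nonneg (by linarith) _
    rw [Real.norm_eq_abs, hg]
    have habs : |1 * β * (t - v + ε) ^ (β - 1) - 1 * β * (t - v) ^ (β - 1)| =
        (-β) * ((t - v) ^ (β - 1) - (t - v + ε) ^ (β - 1)) := by
      rw [abs_of_nonneg (by nlinarith [mul_le_mul_of_nonneg_left hA (by linarith : (0:ℝ) ≤ -β)])]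
      ring
    rw [habs]
    nlinarith [mul_le_mul_of_nonneg_right (show -β ≤ 1 by linarith)
      (show (0:ℝ) ≤ (t - v) ^ (β - 1) - (t - v + ε) ^ (β - 1) by linarith)]
  have hm := (convex_Icc s u).norm_image_sub_le_of_norm_hasDerivWithin_le key bound
    (Set.left_mem_Icc.2 hsu) (Set.right_mem_Icc.2 hsu)
  rw [Real.norm_eq_abs, Real.norm_eq_abs, abs_of_nonneg (by linarith : (0:ℝ) ≤ u - s)] at hm
  calc |((u - v + ε) ^ β - (u - v) ^ β) - ((s - v + ε) ^ β - (s - v) ^ β)| = |f u - f s| := rfl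
    _ ≤ (s - v) ^ (β - 1) * (u - s) := hm
    _ = (u - s) * (s - v) ^ (β - 1) := mul_comm _ _

private lemma aux_interp {d B1 B2 B3 l1 l2 l3 : ℝ} (hd : 0 ≤ d) (h1 : d ≤ B1) (h2 : d ≤ B2)
    (h3 : d ≤ B3) (hl1 : 0 ≤ l1) (hl2 : 0 ≤ l2) (hl3 : 0 ≤ l3) (hsum : l1 + l2 + l3 = 1) :
    d ≤ B1 ^ l1 * B2 ^ l2 * B3 ^ l3 := by
  rcases eq_or_lt_of_le hd with h0 | h0
  · have hpos : (0:ℝ) ≤ B1 ^ l1 * B2 ^ l2 * B3 ^ l3 := by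
      have := hd.trans h1; have := hd.trans h2; have := hd.trans h3
      positivity
    linarith
  · have e1 : d = d ^ l1 * d ^ l2 * d ^ l3 := by
      calc d = d ^ (l1 + l2 + l3) := by rw [hsum, Real.rpow_one]
        _ = d ^ (l1 + l2) * d ^ l3 := Real.rpow_add h0 _ _
        _ = d ^ l1 * d ^ l2 * d ^ l3 := by rw [Real.rpow_add h0]
    rw [e1]
    have n1 : 0 ≤ B1 := hd.trans h1
    have n2 : 0 ≤ B2 := hd.trans h2
    exact mul_le_mul (mul_le_mul (Real.rpow_le_rpow hd h1 hl1) (Real.rpow_le_rpow hd h2 hl2)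
        (Real.rpow_nonneg hd _) (Real.rpow_nonneg n1 _))
      (Real.rpow_le_rpow hd h3 hl3) (Real.rpow_nonneg hd _)
      (mul_nonneg (Real.rpow_nonneg n1 _) (Real.rpow_nonneg n2 _))

private lemma aux_point (β l1 l2 : ℝ) (hβ1 : -1 < β) (hβ0 : β < 0) (hl1 : 0 ≤ l1) (hl2 : 0 ≤ l2)
    (hl12 : l1 + l2 ≤ 1) {v s u ε : ℝ} (hvs : v < s) (hsu : s ≤ u) (hε : 0 < ε) :
    |((u - v + ε) ^ β - (u - v) ^ β) - ((s - v + ε) ^ β - (s - v) ^ β)| ≤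
      2 * ((u - s) ^ l1 * ε ^ l2 * (s - v) ^ (β - l1 - l2)) := by
  have hy : 0 < s - v := by linarith
  have hyu : s - v ≤ u - v := by linarith
  have hd : 0 ≤ |((u - v + ε) ^ β - (u - v) ^ β) - ((s - v + ε) ^ β - (s - v) ^ β)| := abs_nonneg _
  have hB1 : |((u - v + ε) ^ β - (u - v) ^ β) - ((s - v + ε) ^ β - (s - v) ^ β)| ≤
      (u - s) * (s - v) ^ (β - 1) := aux_B1 β hβ1 hβ0 hvs hsu hε
  have hB2 : |((u - v + ε) ^ β - (u - v) ^ β) - ((s - v + ε) ^ β - (s - v) ^ β)| ≤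
      2 * (ε * (s - v) ^ (β - 1)) := by
    have t1 := aux_D2 β hβ1 hβ0 hy hyu hε
    have t2 := aux_D2 β hβ1 hβ0 hy (le_refl (s - v)) hε
    calc |((u - v + ε) ^ β - (u - v) ^ β) - ((s - v + ε) ^ β - (s - v) ^ β)|
        ≤ |(u - v + ε) ^ β - (u - v) ^ β| + |(s - v + ε) ^ β - (s - v) ^ β| := abs_sub _ _
      _ ≤ 2 * (ε * (s - v) ^ (β - 1)) := by linarith
  have hB3 : |((u - v + ε) ^ β - (u - v) ^ β) - ((s - v + ε) ^ β - (s - v) ^ β)| ≤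
      2 * (s - v) ^ β := by
    have t1 := aux_D1 β hβ0 hy hyu hε
    have t2 := aux_D1 β hβ0 hy (le_refl (s - v)) hε
    calc |((u - v + ε) ^ β - (u - v) ^ β) - ((s - v + ε) ^ β - (s - v) ^ β)|
        ≤ |(u - v + ε) ^ β - (u - v) ^ β| + |(s - v + ε) ^ β - (s - v) ^ β| := abs_sub _ _
      _ ≤ 2 * (s - v) ^ β := by linarith
  have hint := aux_interp hd hB1 hB2 hB3 hl1 hl2 (by linarith : (0:ℝ) ≤ 1 - l1 - l2) (by ring)
  refine hint.trans ?_
  have hus : (0:ℝ) ≤ u - s := by linarith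
  have e1 : ((u - s) * (s - v) ^ (β - 1)) ^ l1 = (u - s) ^ l1 * (s - v) ^ ((β - 1) * l1) := by
    rw [Real.mul_rpow hus (Real.rpow_nonneg hy.le _), ← Real.rpow_mul hy.le]
  have e2 : (2 * (ε * (s - v) ^ (β - 1))) ^ l2 = 2 ^ l2 * (ε ^ l2 * (s - v) ^ ((β - 1) * l2)) := by
    rw [Real.mul_rpow (by norm_num) (by positivity),
      Real.mul_rpow hε.le (Real.rpow_nonneg hy.le _), ← Real.rpow_mul hy.le]
  have e3 : (2 * (s - v) ^ β) ^ (1 - l1 - l2) =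
      2 ^ (1 - l1 - l2) * (s - v) ^ (β * (1 - l1 - l2)) := by
    rw [Real.mul_rpow (by norm_num) (by positivity), ← Real.rpow_mul hy.le]
  rw [e1, e2, e3]
  have e4 : (u - s) ^ l1 * (s - v) ^ ((β - 1) * l1) * (2 ^ l2 * (ε ^ l2 *
      (s - v) ^ ((β - 1) * l2))) * (2 ^ (1 - l1 - l2) * (s - v) ^ (β * (1 - l1 - l2))) =
      (2 ^ l2 * 2 ^ (1 - l1 - l2)) * ((u - s) ^ l1 * ε ^ l2 *
        ((s - v) ^ ((β - 1) * l1) * (s - v) ^ ((β - 1) * l2) *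
          (s - v) ^ (β * (1 - l1 - l2)))) := by ring
  rw [e4]
  have e5 : (s - v) ^ ((β - 1) * l1) * (s - v) ^ ((β - 1) * l2) *
      (s - v) ^ (β * (1 - l1 - l2)) = (s - v) ^ (β - l1 - l2) := by
    rw [← Real.rpow_add hy, ← Real.rpow_add hy]
    congr 1
    ring
  rw [e5]
  have e6 : (2:ℝ) ^ l2 * 2 ^ (1 - l1 - l2) ≤ 2 := by
    rw [← Real.rpow_add (by norm_num : (0:ℝ) < 2)]
    calc (2:ℝ) ^ (l2 + (1 - l1 - l2)) ≤ 2 ^ (1:ℝ) :=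
      Real.rpow_le_rpow_of_exponent_le one_le_two (by linarith)
    _ = 2 := Real.rpow_one 2
  exact mul_le_mul_of_nonneg_right e6 (by positivity)

/-- Condition `(C_p)(iv)` for the kernel `g(u) = u^β`, `β ∈ (-1,0)`: if `p ≥ 1`,
`α ∈ (0,1)`, `1 + βp > 0`, `3 + (α+β-3)p > 0` and `T > 0`, then
`∫₀ᵀ ∫ₛᵀ (u-s)^{(α-2)p} (∫₀ˢ |((u-v+ε)^β - (u-v)^β) - ((s-v+ε)^β - (s-v)^β)|^p dv) du ds → 0`
as `ε → 0⁺`. -/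
theorem stmt_14 (β p α T : ℝ) (hβ : β ∈ Set.Ioo (-1:ℝ) 0) (hp : 1 ≤ p)
    (hα : α ∈ Set.Ioo (0:ℝ) 1) (h1 : 0 < 1 + β * p) (h2 : 0 < 3 + (α + β - 3) * p)
    (hT : 0 < T) :
    Tendsto (fun ε : ℝ => ∫ s in (0:ℝ)..T, ∫ u in s..T, (u - s) ^ ((α - 2) * p) *
        ∫ v in (0:ℝ)..s,
          |((u - v + ε) ^ β - (u - v) ^ β) - ((s - v + ε) ^ β - (s - v) ^ β)| ^ p)
      (nhdsWithin 0 (Set.Ioi 0)) (nhds 0) := by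
  obtain ⟨hβ1, hβ0⟩ := hβ
  obtain ⟨hα0, hα1⟩ := hα
  have hp0 : 0 < p := lt_of_lt_of_le one_pos hp
  -- choose interpolation exponents l1, l2
  obtain ⟨l1, l2, hl1pos, hl2pos, hl12, hcv, hcu⟩ : ∃ l1 l2 : ℝ, 0 < l1 ∧ 0 < l2 ∧
      l1 + l2 ≤ 1 ∧ -1 < (β - l1 - l2) * p ∧ -1 < (α - 2) * p + l1 * p := by
    have hip : 1 / p ≤ 1 := by rw [div_le_one hp0]; exact hp
    have hip0 : 0 < 1 / p := by positivity
    have hq : 0 < β + 1 / p := by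
      have he : β + 1 / p = (1 + β * p) / p := by field_simp; ring
      rw [he]; exact div_pos h1 hp0
    have hkey : 2 - α - 1 / p < β + 1 / p := by
      have h3 : 2 - α - β < 2 / p := by rw [lt_div_iff₀ hp0]; nlinarith
      have h4 : 2 / p = 1 / p + 1 / p := by ring
      linarith
    have hmax1 : (0:ℝ) ≤ max 0 (2 - α - 1 / p) := le_max_left _ _
    have hmax2 : 2 - α - 1 / p ≤ max 0 (2 - α - 1 / p) := le_max_right _ _
    have hmax3 : max 0 (2 - α - 1 / p) < β + 1 / p := max_lt hq hkey
    set l1 : ℝ := (max 0 (2 - α - 1 / p) + (β + 1 / p)) / 2 with hl1def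
    set l2 : ℝ := (β + 1 / p - l1) / 2 with hl2def
    have hl1pos : 0 < l1 := by rw [hl1def]; linarith
    have hl1lt : l1 < β + 1 / p := by rw [hl1def]; linarith
    have hl1gt : 2 - α - 1 / p < l1 := by rw [hl1def]; linarith
    have hl1le1 : l1 < 1 := by linarith
    have hl2pos : 0 < l2 := by rw [hl2def]; linarith
    have hpe : -(1 / p) * p = -1 := by field_simp
    refine ⟨l1, l2, hl1pos, hl2pos, by rw [hl2def]; linarith, ?_, ?_⟩
    · have hgt : -(1 / p) < β - l1 - l2 := by rw [hl2def]; linarith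
      calc (-1 : ℝ) = -(1 / p) * p := hpe.symm
        _ < (β - l1 - l2) * p := mul_lt_mul_of_pos_right hgt hp0
    · have hgt : -(1 / p) < α - 2 + l1 := by linarith
      calc (-1 : ℝ) = -(1 / p) * p := hpe.symm
        _ < (α - 2 + l1) * p := mul_lt_mul_of_pos_right hgt hp0
        _ = (α - 2) * p + l1 * p := by ring
  set cv : ℝ := (β - l1 - l2) * p with hcvdef
  set cu : ℝ := (α - 2) * p + l1 * p with hcudef
  have hcv1 : 0 < cv + 1 := by linarith
  have hcu1 : 0 < cu + 1 := by linarith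
  set Tv : ℝ := T ^ (cv + 1) / (cv + 1) with hTvdef
  have hTv0 : 0 ≤ Tv := by rw [hTvdef]; positivity
  set Tu : ℝ := T ^ (cu + 1) / (cu + 1) with hTudef
  have hTu0 : 0 ≤ Tu := by rw [hTudef]; positivity
  set K : ℝ := T * (2 ^ p * Tv * Tu) with hKdef
  -- nonnegativity of the triple integral
  have hnn : ∀ ε : ℝ, ε ∈ Set.Ioi (0:ℝ) →
      0 ≤ ∫ s in (0:ℝ)..T, ∫ u in s..T, (u - s) ^ ((α - 2) * p) *
        ∫ v in (0:ℝ)..s,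
          |((u - v + ε) ^ β - (u - v) ^ β) - ((s - v + ε) ^ β - (s - v) ^ β)| ^ p := by
    intro ε _
    refine intervalIntegral.integral_nonneg hT.le fun s hs => ?_
    refine intervalIntegral.integral_nonneg hs.2 fun u hu => ?_
    refine mul_nonneg (Real.rpow_nonneg (by linarith [hu.1]) _) ?_
    exact intervalIntegral.integral_nonneg hs.1 fun v _ => Real.rpow_nonneg (abs_nonneg _) _
  -- the key quantitative bound
  have main : ∀ ε : ℝ, ε ∈ Set.Ioi (0:ℝ) →
      (∫ s in (0:ℝ)..T, ∫ u in s..T, (u - s) ^ ((α - 2) * p) *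
        ∫ v in (0:ℝ)..s,
          |((u - v + ε) ^ β - (u - v) ^ β) - ((s - v + ε) ^ β - (s - v) ^ β)| ^ p)
        ≤ K * ε ^ (l2 * p) := by
    intro ε hε
    rw [Set.mem_Ioi] at hε
    set C1 : ℝ := 2 ^ p * ε ^ (l2 * p) with hC1def
    have hC10 : 0 ≤ C1 := by rw [hC1def]; positivity
    -- inner integral bound
    have hinner : ∀ s, 0 < s → s ≤ T → ∀ u, s < u →
        (∫ v in (0:ℝ)..s,
          |((u - v + ε) ^ β - (u - v) ^ β) - ((s - v + ε) ^ β - (s - v) ^ β)| ^ p)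
          ≤ C1 * (u - s) ^ (l1 * p) * Tv := by
      intro s hs0 hsT u hsu
      have hus0 : (0:ℝ) ≤ u - s := by linarith
      rw [intervalIntegral.integral_of_le hs0.le]
      have hgint : IntegrableOn (fun v => (C1 * (u - s) ^ (l1 * p)) * (s - v) ^ cv)
          (Set.Ioc 0 s) volume := by
        have h := ((intervalIntegral.intervalIntegrable_rpow' hcv (a := 0) (b := s)).comp_sub_left
          s).symm
        rw [sub_zero, sub_self] at h
        exact (h.const_mul _).1
      have hfnn : 0 ≤ᵐ[volume.restrict (Set.Ioc 0 s)] fun v =>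
          |((u - v + ε) ^ β - (u - v) ^ β) - ((s - v + ε) ^ β - (s - v) ^ β)| ^ p :=
        Filter.Eventually.of_forall fun v => Real.rpow_nonneg (abs_nonneg _) _
      have hsingle : {w : ℝ | ¬ w ≠ s} = {s} := by ext w; simp
      have hae : ∀ᵐ w : ℝ, w ≠ s := by rw [ae_iff, hsingle]; exact measure_singleton s
      have hle : (fun v =>
          |((u - v + ε) ^ β - (u - v) ^ β) - ((s - v + ε) ^ β - (s - v) ^ β)| ^ p)
          ≤ᵐ[volume.restrict (Set.Ioc 0 s)]
          fun v => (C1 * (u - s) ^ (l1 * p)) * (s - v) ^ cv := by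
        filter_upwards [ae_restrict_mem measurableSet_Ioc, ae_restrict_of_ae hae] with v hv hvne
        have hvs : v < s := lt_of_le_of_ne hv.2 hvne
        have hsv : (0:ℝ) < s - v := by linarith
        have hpt := aux_point β l1 l2 hβ1 hβ0 hl1pos.le hl2pos.le hl12 hvs hsu.le hε
        calc |((u - v + ε) ^ β - (u - v) ^ β) - ((s - v + ε) ^ β - (s - v) ^ β)| ^ p
            ≤ (2 * ((u - s) ^ l1 * ε ^ l2 * (s - v) ^ (β - l1 - l2))) ^ p :=
              Real.rpow_le_rpow (abs_nonneg _) hpt (by linarith)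
          _ = (C1 * (u - s) ^ (l1 * p)) * (s - v) ^ cv := by
              rw [Real.mul_rpow (by norm_num) (by positivity),
                Real.mul_rpow (by positivity) (by positivity),
                Real.mul_rpow (by positivity) (by positivity),
                ← Real.rpow_mul hus0, ← Real.rpow_mul hε.le, ← Real.rpow_mul hsv.le,
                hC1def, hcvdef]
              ring
      calc (∫ v in Set.Ioc 0 s,
            |((u - v + ε) ^ β - (u - v) ^ β) - ((s - v + ε) ^ β - (s - v) ^ β)| ^ p)
          ≤ ∫ v in Set.Ioc 0 s, (C1 * (u - s) ^ (l1 * p)) * (s - v) ^ cv :=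
            integral_mono_of_nonneg hfnn hgint hle
        _ = (C1 * (u - s) ^ (l1 * p)) * (s ^ (cv + 1) / (cv + 1)) := by
            rw [← intervalIntegral.integral_of_le hs0.le,
              intervalIntegral.integral_const_mul,
              intervalIntegral.integral_comp_sub_left (fun x => x ^ cv) s,
              sub_self, sub_zero, integral_rpow (Or.inl hcv),
              Real.zero_rpow (ne_of_gt hcv1)]
            ring
        _ ≤ C1 * (u - s) ^ (l1 * p) * Tv := by
            rw [hTvdef]
            refine mul_le_mul_of_nonneg_left ?_
              (mul_nonneg hC10 (Real.rpow_nonneg hus0 _))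
            exact div_le_div_of_nonneg_right
              (Real.rpow_le_rpow hs0.le hsT hcv1.le) hcv1.le
    -- middle integral bound
    have hmid : ∀ s, 0 < s → s ≤ T →
        (∫ u in s..T, (u - s) ^ ((α - 2) * p) *
          ∫ v in (0:ℝ)..s,
            |((u - v + ε) ^ β - (u - v) ^ β) - ((s - v + ε) ^ β - (s - v) ^ β)| ^ p)
          ≤ C1 * Tv * Tu := by
      intro s hs0 hsT
      rw [intervalIntegral.integral_of_le hsT]
      have hgint : IntegrableOn (fun u => (C1 * Tv) * (u - s) ^ cu) (Set.Ioc s T) volume := by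
        have h := (intervalIntegral.intervalIntegrable_rpow' hcu
          (a := 0) (b := T - s)).comp_sub_right s
        rw [zero_add, sub_add_cancel] at h
        exact (h.const_mul _).1
      have hfnn : 0 ≤ᵐ[volume.restrict (Set.Ioc s T)] fun u =>
          (u - s) ^ ((α - 2) * p) * ∫ v in (0:ℝ)..s,
            |((u - v + ε) ^ β - (u - v) ^ β) - ((s - v + ε) ^ β - (s - v) ^ β)| ^ p := by
        filter_upwards [ae_restrict_mem measurableSet_Ioc] with u hu
        refine mul_nonneg (Real.rpow_nonneg (by linarith [hu.1]) _) ?_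
        exact intervalIntegral.integral_nonneg hs0.le
          fun v _ => Real.rpow_nonneg (abs_nonneg _) _
      have hle : (fun u => (u - s) ^ ((α - 2) * p) * ∫ v in (0:ℝ)..s,
            |((u - v + ε) ^ β - (u - v) ^ β) - ((s - v + ε) ^ β - (s - v) ^ β)| ^ p)
          ≤ᵐ[volume.restrict (Set.Ioc s T)] fun u => (C1 * Tv) * (u - s) ^ cu := by
        filter_upwards [ae_restrict_mem measurableSet_Ioc] with u hu
        have hus : (0:ℝ) < u - s := by linarith [hu.1]
        have h5 := hinner s hs0 hsT u hu.1
        calc (u - s) ^ ((α - 2) * p) * ∫ v in (0:ℝ)..s,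
              |((u - v + ε) ^ β - (u - v) ^ β) - ((s - v + ε) ^ β - (s - v) ^ β)| ^ p
            ≤ (u - s) ^ ((α - 2) * p) * (C1 * (u - s) ^ (l1 * p) * Tv) :=
              mul_le_mul_of_nonneg_left h5 (Real.rpow_nonneg hus.le _)
          _ = (C1 * Tv) * ((u - s) ^ ((α - 2) * p) * (u - s) ^ (l1 * p)) := by ring
          _ = (C1 * Tv) * (u - s) ^ cu := by rw [← Real.rpow_add hus, hcudef]
      calc (∫ u in Set.Ioc s T, (u - s) ^ ((α - 2) * p) * ∫ v in (0:ℝ)..s,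
            |((u - v + ε) ^ β - (u - v) ^ β) - ((s - v + ε) ^ β - (s - v) ^ β)| ^ p)
          ≤ ∫ u in Set.Ioc s T, (C1 * Tv) * (u - s) ^ cu :=
            integral_mono_of_nonneg hfnn hgint hle
        _ = (C1 * Tv) * ((T - s) ^ (cu + 1) / (cu + 1)) := by
            rw [← intervalIntegral.integral_of_le hsT,
              intervalIntegral.integral_const_mul,
              intervalIntegral.integral_comp_sub_right (fun x => x ^ cu) s,
              sub_self, integral_rpow (Or.inl hcu), Real.zero_rpow (ne_of_gt hcu1)]
            ring
        _ ≤ C1 * Tv * Tu := by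
            rw [hTudef]
            refine mul_le_mul_of_nonneg_left ?_ (mul_nonneg hC10 hTv0)
            exact div_le_div_of_nonneg_right
              (Real.rpow_le_rpow (by linarith) (by linarith) hcu1.le) hcu1.le
    -- outer integral
    rw [intervalIntegral.integral_of_le hT.le]
    have hGnn : 0 ≤ᵐ[volume.restrict (Set.Ioc 0 T)] fun s =>
        ∫ u in s..T, (u - s) ^ ((α - 2) * p) * ∫ v in (0:ℝ)..s,
          |((u - v + ε) ^ β - (u - v) ^ β) - ((s - v + ε) ^ β - (s - v) ^ β)| ^ p := by
      filter_upwards [ae_restrict_mem measurableSet_Ioc] with s hs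
      refine intervalIntegral.integral_nonneg hs.2 fun u hu => ?_
      refine mul_nonneg (Real.rpow_nonneg (by linarith [hu.1]) _) ?_
      exact intervalIntegral.integral_nonneg hs.1.le
        fun v _ => Real.rpow_nonneg (abs_nonneg _) _
    have hGle : (fun s => ∫ u in s..T, (u - s) ^ ((α - 2) * p) * ∫ v in (0:ℝ)..s,
          |((u - v + ε) ^ β - (u - v) ^ β) - ((s - v + ε) ^ β - (s - v) ^ β)| ^ p)
        ≤ᵐ[volume.restrict (Set.Ioc 0 T)] fun _ => C1 * Tv * Tu := by
      filter_upwards [ae_restrict_mem measurableSet_Ioc] with s hs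
      exact hmid s hs.1 hs.2
    have hconst : IntegrableOn (fun _ : ℝ => C1 * Tv * Tu) (Set.Ioc 0 T) volume :=
      integrableOn_const measure_Ioc_lt_top.ne
    calc (∫ s in Set.Ioc 0 T, ∫ u in s..T, (u - s) ^ ((α - 2) * p) * ∫ v in (0:ℝ)..s,
          |((u - v + ε) ^ β - (u - v) ^ β) - ((s - v + ε) ^ β - (s - v) ^ β)| ^ p)
        ≤ ∫ _ in Set.Ioc 0 T, C1 * Tv * Tu := integral_mono_of_nonneg hGnn hconst hGle
      _ = T * (C1 * Tv * Tu) := by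
          rw [setIntegral_const, measureReal_def, Real.volume_Ioc, smul_eq_mul, sub_zero,
            ENNReal.toReal_ofReal hT.le]
      _ = K * ε ^ (l2 * p) := by rw [hKdef, hC1def]; ring
  -- conclude by squeezing
  have hg0 : Tendsto (fun ε : ℝ => K * ε ^ (l2 * p)) (nhdsWithin 0 (Set.Ioi 0)) (nhds 0) := by
    have h0 : Tendsto (fun ε : ℝ => ε ^ (l2 * p)) (nhds 0) (nhds ((0:ℝ) ^ (l2 * p))) :=
      (Real.continuousAt_rpow_const 0 (l2 * p) (Or.inr (by positivity))).tendsto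
    rw [Real.zero_rpow (by positivity : l2 * p ≠ 0)] at h0
    have h1 := (h0.const_mul K).mono_left (nhdsWithin_le_nhds (s := Set.Ioi (0:ℝ)))
    simpa using h1
  exact squeeze_zero' (eventually_nhdsWithin_of_forall hnn)
    (eventually_nhdsWithin_of_forall main) hg0
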